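/- Suppose the weighted undirected graph a on n nodes is connected. In the RRR structure, X* = [X_{l1}*,…,X_{ln}*] ∈ ℝ^{r×p} is a least squares solution to AXB = F if and only if there exist Y₁*,…,Yₙ* ∈ ℝ^{r×q} and Z₁*,…,Zₙ* ∈ ℝ^{r×q} such that (X*, Y*, Z*) is an optimal solution of problem (RRR-opt), i.e., it is feasible and attains the minimum of the objective over the feasible set. -/
import Mathlib


open Matrix

/-- Squared Frobenius norm of a real matrix: `‖M‖_F² = tr (Mᵀ M)`. -/
noncomputable def frobSq {α β : Type*} [Fintype α] [Fintype β] (M : Matrix α β ℝ) : ℝ :=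
  Matrix.trace (Mᵀ * M)

/-- Frobenius inner product of real matrices: `⟨M,N⟩_F = tr (Mᵀ N)`. -/
noncomputable def frobInner {α β : Type*} [Fintype α] [Fintype β] (M N : Matrix α β ℝ) : ℝ :=
  Matrix.trace (Mᵀ * N)

/-- The weighted undirected graph with adjacency matrix `a` is connected: any two nodes are
joined by a path of adjacent nodes (nodes `u ≠ v` are adjacent iff `a u v > 0`). -/
def GraphConnected {n : ℕ} (a : Matrix (Fin n) (Fin n) ℝ) : Prop :=
  ∀ i j : Fin n, Relation.ReflTransGen (fun u v : Fin n => u ≠ v ∧ 0 < a u v) i j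

/-- Assemble a family of row blocks `M i ∈ ℝ^{d i × β}` into one matrix. -/
def blockRows {n : ℕ} {d : Fin n → ℕ} {β : Type*} (M : ∀ i, Matrix (Fin (d i)) β ℝ) :
    Matrix ((i : Fin n) × Fin (d i)) β ℝ :=
  Matrix.of fun s j => M s.1 s.2 j

/-- Assemble a family of column blocks `M i ∈ ℝ^{α × d i}` into one matrix. -/
def blockCols {n : ℕ} {d : Fin n → ℕ} {α : Type*} (M : ∀ i, Matrix α (Fin (d i)) ℝ) :
    Matrix α ((i : Fin n) × Fin (d i)) ℝ :=
  Matrix.of fun k s => M s.1 k s.2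

/-- The `i`-th row block of a matrix whose rows are partitioned according to `d`. -/
def rowBlk {n : ℕ} {d : Fin n → ℕ} {β : Type*}
    (Y : Matrix ((i : Fin n) × Fin (d i)) β ℝ) (i : Fin n) :
    Matrix (Fin (d i)) β ℝ :=
  Matrix.of fun k j => Y ⟨i, k⟩ j

/-- `[M]_R`: the matrix whose `i`-th row block is `M` and whose other row blocks are zero. -/
def embedRow {n : ℕ} {d : Fin n → ℕ} {β : Type*} (i : Fin n)
    (M : Matrix (Fin (d i)) β ℝ) :
    Matrix ((i' : Fin n) × Fin (d i')) β ℝ :=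
  Matrix.of fun s j => if h : s.1 = i then M (Fin.cast (congrArg d h) s.2) j else 0

/-- `[M]_C`: the matrix whose `i`-th column block is `M` and whose other column blocks are zero. -/
def embedCol {n : ℕ} {d : Fin n → ℕ} {α : Type*} (i : Fin n)
    (M : Matrix α (Fin (d i)) ℝ) :
    Matrix α ((i' : Fin n) × Fin (d i')) ℝ :=
  Matrix.of fun k s => if h : s.1 = i then M k (Fin.cast (congrArg d h) s.2) else 0

/-- Feasibility for problem (RRR-opt). -/
def RRRfeas {n r q : ℕ} {pdim : Fin n → ℕ}
    (a : Matrix (Fin n) (Fin n) ℝ)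
    (Bv : ∀ i, Matrix (Fin (pdim i)) (Fin q) ℝ)
    (Xl : ∀ i, Matrix (Fin r) (Fin (pdim i)) ℝ)
    (Y Z : Fin n → Matrix (Fin r) (Fin q) ℝ) : Prop :=
  (∀ i, (n : ℝ)⁻¹ • Y i - Xl i * Bv i + ∑ j, a i j • (Z i - Z j) = 0) ∧
  (∀ i j, Y i = Y j)

/-- Objective of problem (RRR-opt): `Σ_i ‖A_{vi} Y_i − F_{vi}‖_F²`. -/
noncomputable def RRRobj {n r q : ℕ} {mdim : Fin n → ℕ}
    (Av : ∀ i, Matrix (Fin (mdim i)) (Fin r) ℝ)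
    (Fv : ∀ i, Matrix (Fin (mdim i)) (Fin q) ℝ)
    (Y : Fin n → Matrix (Fin r) (Fin q) ℝ) : ℝ :=
  ∑ i, frobSq (Av i * Y i - Fv i)

/-- Right-hand side of the `X_{li}`-equation in algorithm (RRR-alg). -/
noncomputable def RRRrhsX {n r q : ℕ} {pdim : Fin n → ℕ}
    (Bv : ∀ i, Matrix (Fin (pdim i)) (Fin q) ℝ)
    (L1 : Fin n → Matrix (Fin r) (Fin q) ℝ) (i : Fin n) :
    Matrix (Fin r) (Fin (pdim i)) ℝ :=
  L1 i * (Bv i)ᵀ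

/-- Right-hand side of the `Y_i`-equation in algorithm (RRR-alg). -/
noncomputable def RRRrhsY {n r q : ℕ} {mdim : Fin n → ℕ}
    (a : Matrix (Fin n) (Fin n) ℝ)
    (Av : ∀ i, Matrix (Fin (mdim i)) (Fin r) ℝ)
    (Fv : ∀ i, Matrix (Fin (mdim i)) (Fin q) ℝ)
    (Y L1 L2 : Fin n → Matrix (Fin r) (Fin q) ℝ) (i : Fin n) :
    Matrix (Fin r) (Fin q) ℝ :=
  -((Av i)ᵀ * (Av i * Y i - Fv i)) - ∑ j, a i j • (Y i - Y j)
    - (n : ℝ)⁻¹ • L1 i - ∑ j, a i j • (L2 i - L2 j)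

/-- Right-hand side of the `Z_i`-equation in algorithm (RRR-alg). -/
noncomputable def RRRrhsZ {n r q : ℕ}
    (a : Matrix (Fin n) (Fin n) ℝ)
    (L1 : Fin n → Matrix (Fin r) (Fin q) ℝ) (i : Fin n) :
    Matrix (Fin r) (Fin q) ℝ :=
  -∑ j, a i j • (L1 i - L1 j)

/-- Right-hand side of the `Λ¹_i`-equation in algorithm (RRR-alg), with the derivative
feedbacks replaced by the right-hand sides that determine them. -/
noncomputable def RRRrhsL1 {n r q : ℕ} {mdim pdim : Fin n → ℕ}
    (a : Matrix (Fin n) (Fin n) ℝ)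
    (Av : ∀ i, Matrix (Fin (mdim i)) (Fin r) ℝ)
    (Bv : ∀ i, Matrix (Fin (pdim i)) (Fin q) ℝ)
    (Fv : ∀ i, Matrix (Fin (mdim i)) (Fin q) ℝ)
    (Xl : ∀ i, Matrix (Fin r) (Fin (pdim i)) ℝ)
    (Y Z L1 L2 : Fin n → Matrix (Fin r) (Fin q) ℝ) (i : Fin n) :
    Matrix (Fin r) (Fin q) ℝ :=
  (n : ℝ)⁻¹ • (Y i + RRRrhsY a Av Fv Y L1 L2 i)
    - (Xl i + RRRrhsX Bv L1 i) * Bv i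
    + ∑ j, a i j • (Z i - Z j) - ∑ j, a i j • (L1 i - L1 j)

/-- Right-hand side of the `Λ²_i`-equation in algorithm (RRR-alg), with the derivative
feedbacks replaced by the right-hand sides that determine them. -/
noncomputable def RRRrhsL2 {n r q : ℕ} {mdim : Fin n → ℕ}
    (a : Matrix (Fin n) (Fin n) ℝ)
    (Av : ∀ i, Matrix (Fin (mdim i)) (Fin r) ℝ)
    (Fv : ∀ i, Matrix (Fin (mdim i)) (Fin q) ℝ)
    (Y L1 L2 : Fin n → Matrix (Fin r) (Fin q) ℝ) (i : Fin n) :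
    Matrix (Fin r) (Fin q) ℝ :=
  ∑ j, a i j • (Y i - Y j)
    + ∑ j, a i j • (RRRrhsY a Av Fv Y L1 L2 i - RRRrhsY a Av Fv Y L1 L2 j)

/-- Equilibrium of algorithm (RRR-alg): all right-hand sides vanish. -/
noncomputable def RRRequil {n r q : ℕ} {mdim pdim : Fin n → ℕ}
    (a : Matrix (Fin n) (Fin n) ℝ)
    (Av : ∀ i, Matrix (Fin (mdim i)) (Fin r) ℝ)
    (Bv : ∀ i, Matrix (Fin (pdim i)) (Fin q) ℝ)
    (Fv : ∀ i, Matrix (Fin (mdim i)) (Fin q) ℝ)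
    (Xl : ∀ i, Matrix (Fin r) (Fin (pdim i)) ℝ)
    (Y Z L1 L2 : Fin n → Matrix (Fin r) (Fin q) ℝ) : Prop :=
  ∀ i, RRRrhsX Bv L1 i = 0 ∧ RRRrhsY a Av Fv Y L1 L2 i = 0 ∧
    RRRrhsZ a L1 i = 0 ∧ RRRrhsL1 a Av Bv Fv Xl Y Z L1 L2 i = 0 ∧
    RRRrhsL2 a Av Fv Y L1 L2 i = 0


section RRRaux
open Finset

lemma lap_surj {n : ℕ} (hn : 0 < n) (a : Matrix (Fin n) (Fin n) ℝ)
    (hsym : ∀ i j, a i j = a j i) (hnonneg : ∀ i j, 0 ≤ a i j)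
    (hconn : GraphConnected a)
    (w : Fin n → ℝ) (hw : ∑ i, w i = 0) :
    ∃ z : Fin n → ℝ, ∀ i, ∑ j, a i j * (z i - z j) = w i := by
  classical
  set L : (Fin n → ℝ) →ₗ[ℝ] (Fin n → ℝ) :=
    { toFun := fun z i => ∑ j, a i j * (z i - z j)
      map_add' := by
        intro x y; funext i
        show ∑ j, a i j * ((x+y) i - (x+y) j) = (∑ j, a i j * (x i - x j)) + ∑ j, a i j * (y i - y j)
        rw [← Finset.sum_add_distrib]
        exact Finset.sum_congr rfl fun j _ => by simp [Pi.add_apply]; ring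
      map_smul' := by
        intro c x; funext i
        show ∑ j, a i j * ((c • x) i - (c • x) j) = c * ∑ j, a i j * (x i - x j)
        rw [Finset.mul_sum]
        exact Finset.sum_congr rfl fun j _ => by simp [Pi.smul_apply, smul_eq_mul]; ring } with hL
  set sumL : (Fin n → ℝ) →ₗ[ℝ] ℝ :=
    { toFun := fun z => ∑ i, z i
      map_add' := by intro x y; simp [Finset.sum_add_distrib]
      map_smul' := by intro c x; simp [Finset.mul_sum] } with hsumL
  have hLapp : ∀ z i, L z i = ∑ j, a i j * (z i - z j) := fun z i => rfl
  -- kernel of L is the constants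
  have hker : LinearMap.ker L = Submodule.span ℝ {(fun _ => (1:ℝ))} := by
    apply le_antisymm
    · intro z hz
      have hz0 : L z = 0 := hz
      -- quadratic form vanishes
      have hquad : ∑ i, ∑ j, a i j * (z i - z j) ^ 2 = 0 := by
        have h1 : ∑ i, ∑ j, a i j * (z i - z j) ^ 2
            = ∑ i, ∑ j, a i j * (z i * (z i - z j))
              - ∑ i, ∑ j, a i j * (z j * (z i - z j)) := by
          rw [← Finset.sum_sub_distrib]
          refine Finset.sum_congr rfl fun i _ => ?_
          rw [← Finset.sum_sub_distrib]
          exact Finset.sum_congr rfl fun j _ => by ring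
        have h2 : ∑ i, ∑ j, a i j * (z j * (z i - z j))
            = - ∑ i, ∑ j, a i j * (z i * (z i - z j)) := by
          rw [Finset.sum_comm]
          rw [← Finset.sum_neg_distrib]
          refine Finset.sum_congr rfl fun i _ => ?_
          rw [← Finset.sum_neg_distrib]
          refine Finset.sum_congr rfl fun j _ => ?_
          rw [hsym j i]; ring
        have h3 : ∑ i, ∑ j, a i j * (z i * (z i - z j)) = 0 := by
          have : ∀ i, ∑ j, a i j * (z i * (z i - z j)) = z i * L z i := by
            intro i; rw [hLapp, Finset.mul_sum]
            exact Finset.sum_congr rfl fun j _ => by ring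
          simp only [this, hz0, Pi.zero_apply, mul_zero, Finset.sum_const_zero]
        rw [h1, h2, h3]; ring
      have hterm : ∀ i j, a i j * (z i - z j) ^ 2 = 0 := by
        intro i j
        have hnn : ∀ i ∈ (univ : Finset (Fin n)), (0:ℝ) ≤ ∑ j, a i j * (z i - z j) ^ 2 := by
          intro i _
          exact Finset.sum_nonneg fun j _ => mul_nonneg (hnonneg i j) (sq_nonneg _)
        have h4 := (Finset.sum_eq_zero_iff_of_nonneg hnn).mp hquad i (mem_univ i)
        have hnn2 : ∀ j ∈ (univ : Finset (Fin n)), (0:ℝ) ≤ a i j * (z i - z j) ^ 2 :=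
          fun j _ => mul_nonneg (hnonneg i j) (sq_nonneg _)
        exact (Finset.sum_eq_zero_iff_of_nonneg hnn2).mp h4 j (mem_univ j)
      have hedge : ∀ i j : Fin n, 0 < a i j → z i = z j := by
        intro i j hpos
        have := hterm i j
        have h5 : (z i - z j) ^ 2 = 0 := by
          rcases mul_eq_zero.mp this with h | h
          · exact absurd h hpos.ne'
          · exact h
        have := pow_eq_zero_iff (n := 2) (by norm_num) |>.mp h5
        linarith [sub_eq_zero.mp this]
      have hconst : ∀ i j : Fin n, z i = z j := by
        intro i j
        induction hconn i j with
        | refl => rfl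
        | tail _ h ih => exact ih.trans (hedge _ _ h.2)
      refine Submodule.mem_span_singleton.mpr ⟨z ⟨0, hn⟩, ?_⟩
      funext i; simp [hconst i ⟨0, hn⟩]
    · rw [Submodule.span_le]
      intro x hx
      simp only [Set.mem_singleton_iff] at hx
      subst hx
      simp only [SetLike.mem_coe, LinearMap.mem_ker]
      funext i; simp [hLapp]
  have hone_ne : (fun _ : Fin n => (1:ℝ)) ≠ 0 := by
    intro h
    have := congrFun h ⟨0, hn⟩
    simp at this
  have hker_rank : Module.finrank ℝ (LinearMap.ker L) = 1 := by
    rw [hker]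
    exact finrank_span_singleton hone_ne
  have hpi : Module.finrank ℝ (Fin n → ℝ) = n := by simp
  have hrn := LinearMap.finrank_range_add_finrank_ker L
  rw [hker_rank, hpi] at hrn
  -- range L ≤ ker sumL
  have hle : LinearMap.range L ≤ LinearMap.ker sumL := by
    rintro _ ⟨z, rfl⟩
    simp only [LinearMap.mem_ker]
    show ∑ i, L z i = 0
    have h2 : ∑ i, ∑ j, a i j * (z i - z j) = - ∑ i, ∑ j, a i j * (z i - z j) := by
      conv_lhs => rw [Finset.sum_comm]
      rw [← Finset.sum_neg_distrib]
      refine Finset.sum_congr rfl fun i _ => ?_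
      rw [← Finset.sum_neg_distrib]
      refine Finset.sum_congr rfl fun j _ => ?_
      rw [hsym j i]; ring
    have h3 : ∑ i, ∑ j, a i j * (z i - z j) = 0 := by linarith
    simpa [hLapp] using h3
  have hsum_surj : LinearMap.range sumL = ⊤ := by
    rw [LinearMap.range_eq_top]
    intro c
    exact ⟨Pi.single ⟨0, hn⟩ c, by simp [hsumL]⟩
  have hkersum_rank : Module.finrank ℝ (LinearMap.ker sumL) = n - 1 := by
    have := LinearMap.finrank_range_add_finrank_ker sumL
    rw [hsum_surj, hpi] at this
    have h1 : Module.finrank ℝ (⊤ : Submodule ℝ ℝ) = 1 := by simp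
    omega
  have heq : LinearMap.range L = LinearMap.ker sumL := by
    apply Submodule.eq_of_le_of_finrank_le hle
    rw [hkersum_rank]; omega
  have hwmem : w ∈ LinearMap.ker sumL := by
    simp only [LinearMap.mem_ker]; exact hw
  rw [← heq] at hwmem
  obtain ⟨z, hz⟩ := hwmem
  exact ⟨z, fun i => congrFun hz i⟩

lemma lap_surj_mat {n r q : ℕ} (hn : 0 < n) (a : Matrix (Fin n) (Fin n) ℝ)
    (hsym : ∀ i j, a i j = a j i) (hnonneg : ∀ i j, 0 ≤ a i j)
    (hconn : GraphConnected a)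
    (W : Fin n → Matrix (Fin r) (Fin q) ℝ) (hW : ∑ i, W i = 0) :
    ∃ Z : Fin n → Matrix (Fin r) (Fin q) ℝ, ∀ i, ∑ j, a i j • (Z i - Z j) = W i := by
  have h : ∀ k l, ∃ z : Fin n → ℝ, ∀ i, ∑ j, a i j * (z i - z j) = W i k l := by
    intro k l
    refine lap_surj hn a hsym hnonneg hconn (fun i => W i k l) ?_
    have := congrFun (congrFun hW k) l
    simpa [Matrix.sum_apply] using this
  choose z hz using h
  refine ⟨fun i => Matrix.of fun k l => z k l i, fun i => ?_⟩
  ext k l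
  simpa [Matrix.sum_apply] using hz k l i

lemma frobSq_eq_sum {α β : Type*} [Fintype α] [Fintype β] (M : Matrix α β ℝ) :
    frobSq M = ∑ i, ∑ j, M i j ^ 2 := by
  rw [frobSq, Matrix.trace, Finset.sum_comm]
  refine Finset.sum_congr rfl fun i _ => ?_
  simp [Matrix.diag, Matrix.mul_apply, Matrix.transpose_apply, sq]

lemma blockCols_mul_blockRows {n r q : ℕ} {pdim : Fin n → ℕ}
    (Xl : ∀ i, Matrix (Fin r) (Fin (pdim i)) ℝ)
    (Bv : ∀ i, Matrix (Fin (pdim i)) (Fin q) ℝ) :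
    blockCols Xl * blockRows Bv = ∑ i, Xl i * Bv i := by
  ext k j
  rw [Matrix.mul_apply, ← Finset.univ_sigma_univ, Finset.sum_sigma, Matrix.sum_apply]
  exact Finset.sum_congr rfl fun i _ => by rw [Matrix.mul_apply]; rfl

lemma blockRows_mul {n r : ℕ} {mdim : Fin n → ℕ} {β : Type*} [Fintype β]
    (Av : ∀ i, Matrix (Fin (mdim i)) (Fin r) ℝ) (N : Matrix (Fin r) β ℝ) :
    blockRows Av * N = blockRows (fun i => Av i * N) := by
  ext ⟨i, s⟩ j
  simp [Matrix.mul_apply, blockRows]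

lemma blockRows_sub {n : ℕ} {mdim : Fin n → ℕ} {β : Type*}
    (M M' : ∀ i, Matrix (Fin (mdim i)) β ℝ) :
    blockRows M - blockRows M' = blockRows (fun i => M i - M' i) := by
  ext ⟨i, s⟩ j
  simp [blockRows]

lemma frobSq_blockRows {n : ℕ} {mdim : Fin n → ℕ} {β : Type*} [Fintype β]
    (M : ∀ i, Matrix (Fin (mdim i)) β ℝ) :
    frobSq (blockRows M) = ∑ i, frobSq (M i) := by
  rw [frobSq_eq_sum, ← Finset.univ_sigma_univ, Finset.sum_sigma]
  exact Finset.sum_congr rfl fun i _ => by rw [frobSq_eq_sum]; rfl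

lemma double_sum_zero {n r q : ℕ} (a : Matrix (Fin n) (Fin n) ℝ)
    (hsym : ∀ i j, a i j = a j i) (Z : Fin n → Matrix (Fin r) (Fin q) ℝ) :
    ∑ i, ∑ j, a i j • (Z i - Z j) = 0 := by
  have h2 : ∑ i, ∑ j, a i j • (Z i - Z j) = - ∑ i, ∑ j, a i j • (Z i - Z j) := by
    conv_lhs => rw [Finset.sum_comm]
    rw [← Finset.sum_neg_distrib]
    refine Finset.sum_congr rfl fun i _ => ?_
    rw [← Finset.sum_neg_distrib]
    refine Finset.sum_congr rfl fun j _ => ?_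
    rw [hsym j i, ← smul_neg, neg_sub]
  have h3 := eq_neg_iff_add_eq_zero.mp h2
  have h4 : (2:ℝ) • (∑ i, ∑ j, a i j • (Z i - Z j)) = 0 := by
    rw [two_smul]; exact h3
  exact (smul_eq_zero.mp h4).resolve_left (by norm_num)

lemma sum_const_inv_smul {n r q : ℕ} (hn : 0 < n) (C : Matrix (Fin r) (Fin q) ℝ) :
    ∑ _i : Fin n, (n : ℝ)⁻¹ • C = C := by
  rw [Finset.sum_const, Finset.card_univ, Fintype.card_fin]
  rw [← Nat.cast_smul_eq_nsmul ℝ, smul_smul,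
    mul_inv_cancel₀ (Nat.cast_ne_zero.mpr hn.ne'), one_smul]

/-- Feasible points have all `Y` blocks equal to `∑ j, Xl j * Bv j`. -/
lemma feas_Y {n r q : ℕ} {pdim : Fin n → ℕ} (hn : 0 < n)
    (a : Matrix (Fin n) (Fin n) ℝ) (hsym : ∀ i j, a i j = a j i)
    (Bv : ∀ i, Matrix (Fin (pdim i)) (Fin q) ℝ)
    (Xl : ∀ i, Matrix (Fin r) (Fin (pdim i)) ℝ)
    (Y Z : Fin n → Matrix (Fin r) (Fin q) ℝ)
    (hfeas : RRRfeas a Bv Xl Y Z) :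
    ∀ i, Y i = ∑ j, Xl j * Bv j := by
  obtain ⟨h1, h2⟩ := hfeas
  set i0 : Fin n := ⟨0, hn⟩
  have hsum : ∑ i, ((n:ℝ)⁻¹ • Y i - Xl i * Bv i + ∑ j, a i j • (Z i - Z j)) = 0 :=
    Finset.sum_eq_zero fun i _ => h1 i
  rw [Finset.sum_add_distrib, Finset.sum_sub_distrib, double_sum_zero a hsym,
    add_zero] at hsum
  have hY : ∑ i, (n:ℝ)⁻¹ • Y i = Y i0 := by
    rw [Finset.sum_congr rfl fun i _ => by rw [h2 i i0]]
    exact sum_const_inv_smul hn (Y i0)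
  rw [hY, sub_eq_zero] at hsum
  intro i
  rw [h2 i i0, hsum]

/-- Every `Xl` extends to a feasible point with constant `Y`. -/
lemma feas_mk {n r q : ℕ} {pdim : Fin n → ℕ} (hn : 0 < n)
    (a : Matrix (Fin n) (Fin n) ℝ) (hsym : ∀ i j, a i j = a j i)
    (hnonneg : ∀ i j, 0 ≤ a i j) (hconn : GraphConnected a)
    (Bv : ∀ i, Matrix (Fin (pdim i)) (Fin q) ℝ)
    (Xl : ∀ i, Matrix (Fin r) (Fin (pdim i)) ℝ) :
    ∃ Z, RRRfeas a Bv Xl (fun _ => ∑ j, Xl j * Bv j) Z := by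
  set C : Matrix (Fin r) (Fin q) ℝ := ∑ j, Xl j * Bv j with hC
  have hW : ∑ i, (Xl i * Bv i - (n:ℝ)⁻¹ • C) = 0 := by
    rw [Finset.sum_sub_distrib, sum_const_inv_smul hn C, ← hC, sub_self]
  obtain ⟨Z, hZ⟩ := lap_surj_mat hn a hsym hnonneg hconn _ hW
  refine ⟨Z, fun i => ?_, fun i j => rfl⟩
  rw [hZ i]
  abel

end RRRaux

theorem stmt_7 (n r q : ℕ) (hn : 0 < n) (mdim pdim : Fin n → ℕ)
    (a : Matrix (Fin n) (Fin n) ℝ)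
    (hsym : ∀ i j, a i j = a j i) (hnonneg : ∀ i j, 0 ≤ a i j)
    (hdiag : ∀ i, a i i = 0) (hconn : GraphConnected a)
    (Av : ∀ i, Matrix (Fin (mdim i)) (Fin r) ℝ)
    (Bv : ∀ i, Matrix (Fin (pdim i)) (Fin q) ℝ)
    (Fv : ∀ i, Matrix (Fin (mdim i)) (Fin q) ℝ)
    (Xl : ∀ i, Matrix (Fin r) (Fin (pdim i)) ℝ) :
    (∀ X' : Matrix (Fin r) ((i : Fin n) × Fin (pdim i)) ℝ,
        frobSq (blockRows Av * blockCols Xl * blockRows Bv - blockRows Fv) ≤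
          frobSq (blockRows Av * X' * blockRows Bv - blockRows Fv)) ↔
      (∃ Y Z : Fin n → Matrix (Fin r) (Fin q) ℝ,
        RRRfeas a Bv Xl Y Z ∧
          ∀ Xl' : ∀ i, Matrix (Fin r) (Fin (pdim i)) ℝ,
            ∀ Y' Z' : Fin n → Matrix (Fin r) (Fin q) ℝ,
              RRRfeas a Bv Xl' Y' Z' → RRRobj Av Fv Y ≤ RRRobj Av Fv Y') := by
  
  classical
  -- objective value of a block-column matrix
  have hobj : ∀ Xl' : ∀ i, Matrix (Fin r) (Fin (pdim i)) ℝ,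
      frobSq (blockRows Av * blockCols Xl' * blockRows Bv - blockRows Fv)
        = ∑ i, frobSq (Av i * (∑ j, Xl' j * Bv j) - Fv i) := by
    intro Xl'
    rw [Matrix.mul_assoc, blockCols_mul_blockRows, blockRows_mul, blockRows_sub,
      frobSq_blockRows]
  constructor
  · intro h
    obtain ⟨Z, hZ⟩ := feas_mk hn a hsym hnonneg hconn Bv Xl
    refine ⟨fun _ => ∑ j, Xl j * Bv j, Z, hZ, ?_⟩
    intro Xl' Y' Z' hfeas'
    have hY' := feas_Y hn a hsym Bv Xl' Y' Z' hfeas'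
    have e1 : RRRobj Av Fv (fun _ => ∑ j, Xl j * Bv j)
        = frobSq (blockRows Av * blockCols Xl * blockRows Bv - blockRows Fv) := by
      rw [hobj]; rfl
    have e2 : RRRobj Av Fv Y'
        = frobSq (blockRows Av * blockCols Xl' * blockRows Bv - blockRows Fv) := by
      rw [hobj, RRRobj]
      exact Finset.sum_congr rfl fun i _ => by rw [hY' i]
    rw [e1, e2]
    exact h (blockCols Xl')
  · rintro ⟨Y, Z, hfeas, hmin⟩
    intro X'
    set Xl' : ∀ i, Matrix (Fin r) (Fin (pdim i)) ℝ :=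
      fun i => Matrix.of fun k s => X' k ⟨i, s⟩ with hXl'
    have hX' : blockCols Xl' = X' := by
      ext k ⟨i, s⟩; rfl
    obtain ⟨Z'', hZ''⟩ := feas_mk hn a hsym hnonneg hconn Bv Xl'
    have hle := hmin Xl' (fun _ => ∑ j, Xl' j * Bv j) Z'' hZ''
    have hY := feas_Y hn a hsym Bv Xl Y Z hfeas
    have e1 : RRRobj Av Fv Y
        = frobSq (blockRows Av * blockCols Xl * blockRows Bv - blockRows Fv) := by
      rw [hobj, RRRobj]
      exact Finset.sum_congr rfl fun i _ => by rw [hY i]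
    have e2 : RRRobj Av Fv (fun _ => ∑ j, Xl' j * Bv j)
        = frobSq (blockRows Av * X' * blockRows Bv - blockRows Fv) := by
      rw [← hX', hobj]; rfl
    rw [e1, e2] at hle
    exact hle
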